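/- Suppose the graph G contains a vertex x and a set U of at least two other vertices such that the induced subgraph G[U] is not complete and for all u ∈ U we have x ∈ N(u) ⊆ U ∪ {x}. Then the number of maximum independent sets of G equals the number of maximum independent sets of G − x. -/
import Mathlib


attribute [local instance] Classical.propDecidable

/-- `s` is an independent set of vertices of `G`. -/
def IsIndep {V : Type*} (G : SimpleGraph V) (s : Finset V) : Prop :=
  ∀ u ∈ s, ∀ v ∈ s, ¬ G.Adj u v

/-- `s` is a maximum independent set of vertices of `G`. -/
def IsMaxmIndep {V : Type*} (G : SimpleGraph V) (s : Finset V) : Prop :=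
  IsIndep G s ∧ ∀ t : Finset V, IsIndep G t → t.card ≤ s.card

/-- `m'(G)`: the number of maximum independent sets of `G`. -/
noncomputable def numMaxmIndep {V : Type*} [Fintype V] (G : SimpleGraph V) : ℕ :=
  Set.ncard {s : Finset V | IsMaxmIndep G s}

/-- Lemma : deleting such a vertex  preserves the number of maximum
independent sets. -/
theorem stmt6 {V : Type*} [Fintype V] (G : SimpleGraph V) (x : V) (U : Set V)
    (hxU : x ∉ U) (hcard : 2 ≤ U.ncard) (hnc : ¬ G.IsClique U)
    (hU : ∀ u ∈ U, G.Adj x u ∧ G.neighborSet u ⊆ U ∪ {x}) :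
    numMaxmIndep G = numMaxmIndep (G.induce {y | y ≠ x}) := by
  classical
  -- obtain two nonadjacent vertices in U
  rw [SimpleGraph.isClique_iff, Set.Pairwise] at hnc
  push_neg at hnc
  obtain ⟨u, hu, v, hv, huv, hnadj⟩ := hnc
  -- exchange lemma: an independent set containing x can be strictly improved,
  -- by an independent set avoiding x
  have exch : ∀ s : Finset V, IsIndep G s → x ∈ s →
      ∃ s' : Finset V, IsIndep G s' ∧ s.card < s'.card ∧ x ∉ s' := by
    intro s hs hxs
    have key : ∀ w ∈ s.erase x, ∀ z ∈ U, ¬ G.Adj z w := by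
      intro w hw z hz hadj
      have hwN : w ∈ G.neighborSet z := hadj
      have hwU : w ∈ U ∪ {x} := (hU z hz).2 hwN
      have hwx : w ≠ x := (Finset.mem_erase.mp hw).1
      have hwU' : w ∈ U := by
        rcases hwU with h | h
        · exact h
        · exact absurd h hwx
      exact hs x hxs w (Finset.mem_of_mem_erase hw) (hU w hwU').1
    have hus : u ∉ s := fun h => hs x hxs u h (hU u hu).1
    have hvs : v ∉ s := fun h => hs x hxs v h (hU v hv).1
    refine ⟨insert u (insert v (s.erase x)), ?_, ?_, ?_⟩
    · intro a ha b hb hadj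
      simp only [Finset.mem_insert] at ha hb
      rcases ha with h1 | h1 | ha <;> rcases hb with h2 | h2 | hb <;> subst_vars <;>
        first
          | exact G.irrefl hadj
          | exact hnadj hadj
          | exact hnadj hadj.symm
          | exact key _ hb _ hu hadj
          | exact key _ hb _ hv hadj
          | exact key _ ha _ hu hadj.symm
          | exact key _ ha _ hv hadj.symm
          | exact hs _ (Finset.mem_of_mem_erase ha) _ (Finset.mem_of_mem_erase hb) hadj
    · have h1 : u ∉ insert v (s.erase x) := by
        simp only [Finset.mem_insert, Finset.mem_erase]
        push_neg
        exact ⟨huv, fun _ => hus⟩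
      have h2 : v ∉ s.erase x := fun h => hvs (Finset.mem_of_mem_erase h)
      rw [Finset.card_insert_of_notMem h1, Finset.card_insert_of_notMem h2,
        Finset.card_erase_of_mem hxs]
      have : 1 ≤ s.card := Finset.card_pos.mpr ⟨x, hxs⟩
      omega
    · simp only [Finset.mem_insert, Finset.mem_erase]
      push_neg
      refine ⟨?_, ?_, fun h => absurd rfl h⟩
      · rintro rfl; exact hxU hu
      · rintro rfl; exact hxU hv
  -- max independent sets avoid x
  have nomem : ∀ s : Finset V, IsMaxmIndep G s → x ∉ s := by
    intro s hs hxs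
    obtain ⟨s', hs', hlt, -⟩ := exch s hs.1 hxs
    exact absurd (hs.2 s' hs') (by omega)
  set p : V → Prop := fun y => y ∈ ({y | y ≠ x} : Set V) with hp
  set emb : ({y : V | y ≠ x} : Set V) ↪ V := Function.Embedding.subtype p with hemb
  set f : Finset ({y : V | y ≠ x} : Set V) → Finset V := fun t => t.map emb with hf
  have findep : ∀ t, IsIndep (G.induce {y | y ≠ x}) t ↔ IsIndep G (f t) := by
    intro t
    constructor
    · intro h a ha b hb hadj
      simp only [hf, Finset.mem_map] at ha hb
      obtain ⟨a', ha', rfl⟩ := ha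
      obtain ⟨b', hb', rfl⟩ := hb
      exact h a' ha' b' hb' hadj
    · intro h a ha b hb hadj
      exact h (emb a) (Finset.mem_map_of_mem _ ha) (emb b) (Finset.mem_map_of_mem _ hb) hadj
  -- main bijection
  have main : {s : Finset V | IsMaxmIndep G s} =
      f '' {t : Finset ({y : V | y ≠ x} : Set V) | IsMaxmIndep (G.induce {y | y ≠ x}) t} := by
    ext s
    simp only [Set.mem_setOf_eq, Set.mem_image]
    constructor
    · intro hs
      have hxs : x ∉ s := nomem s hs
      have hmem : ∀ a ∈ s, p a := fun a ha => by
        simp only [hp, Set.mem_setOf_eq]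
        rintro rfl; exact hxs ha
      refine ⟨s.subtype p, ⟨?_, ?_⟩, ?_⟩
      · rw [findep]
        have : f (s.subtype p) = s := by
          simp only [hf, hemb, Finset.subtype_map]
          exact Finset.filter_true_of_mem hmem
        rw [this]; exact hs.1
      · intro t' ht'
        have : (f t').card ≤ s.card := hs.2 (f t') ((findep t').mp ht')
        have hcard' : f (s.subtype p) = s := by
          simp only [hf, hemb, Finset.subtype_map]
          exact Finset.filter_true_of_mem hmem
        calc t'.card = (f t').card := (Finset.card_map _).symm
          _ ≤ s.card := this
          _ = (f (s.subtype p)).card := by rw [hcard']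
          _ = (s.subtype p).card := Finset.card_map _
      · simp only [hf, hemb, Finset.subtype_map]
        exact Finset.filter_true_of_mem hmem
    · rintro ⟨t, ⟨ht1, ht2⟩, rfl⟩
      refine ⟨(findep t).mp ht1, ?_⟩
      intro s' hs'
      -- reduce to s' avoiding x
      obtain ⟨s'', hs'', hcard'', hxs''⟩ :
          ∃ s'' : Finset V, IsIndep G s'' ∧ s'.card ≤ s''.card ∧ x ∉ s'' := by
        by_cases hx' : x ∈ s'
        · obtain ⟨s'', h1, h2, h3⟩ := exch s' hs' hx'
          exact ⟨s'', h1, le_of_lt h2, h3⟩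
        · exact ⟨s', hs', le_refl _, hx'⟩
      have hmem : ∀ a ∈ s'', p a := fun a ha => by
        simp only [hp, Set.mem_setOf_eq]
        rintro rfl; exact hxs'' ha
      have hfeq : f (s''.subtype p) = s'' := by
        simp only [hf, hemb, Finset.subtype_map]
        exact Finset.filter_true_of_mem hmem
      have hind : IsIndep (G.induce {y | y ≠ x}) (s''.subtype p) := by
        rw [findep, hfeq]; exact hs''
      have := ht2 _ hind
      calc s'.card ≤ s''.card := hcard''
        _ = (f (s''.subtype p)).card := by rw [hfeq]
        _ = (s''.subtype p).card := Finset.card_map _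
        _ ≤ t.card := this
        _ = (f t).card := (Finset.card_map _).symm
  have finj : Function.Injective f := fun a b h => Finset.map_injective emb h
  unfold numMaxmIndep
  rw [main, Set.ncard_image_of_injective _ finj]
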